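/- Let a_i ∈ F denote the coefficient of w_i in ∂y'_1 (for 1 ≤ i ≤ n−1). Then the cycle y'_1 + Σ_{i=1}^{n−1} a_i y_i is not in the image of ∂, i.e., there is no ξ ∈ C∞ with ∂ξ = y'_1 + Σ_{i=1}^{n−1} a_i y_i; equivalently, the homology class [y_n] ∈ H(C∞, ∂) is nonzero. (This is the nontriviality assertion of Lemma 4.4 of the paper.) -/

import Mathlib

/-- The labels of the `F[U,U⁻¹]`-basis `S` of `CFK^∞(T_{2,3;n,1})`. -/
inductive Gen : Type
  | x (k : ℕ) | x' (k : ℕ) | y (k : ℕ) | y' (k : ℕ) | z (k : ℕ) | w (k : ℕ)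
  deriving DecidableEq

/-- The validity predicate carving out the basis set `S` for a given `n`:
`S = {y_n, x_n, y'_1} ∪ {x'_k, y'_k : 2 ≤ k ≤ n} ∪ {x_k, z_k : 2 ≤ k ≤ n−1} ∪ {y_k, w_k : 1 ≤ k ≤ n−1}`,
where we encode `x_n` as `.x n`, `y_n` as `.y n` and `y'_1` as `.y' 1`. -/
def Gen.Valid (n : ℕ) : Gen → Prop
  | .x k => 2 ≤ k ∧ k ≤ n
  | .x' k => 2 ≤ k ∧ k ≤ n
  | .y k => 1 ≤ k ∧ k ≤ n
  | .y' k => 1 ≤ k ∧ k ≤ n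
  | .z k => 2 ≤ k ∧ k ≤ n - 1
  | .w k => 1 ≤ k ∧ k ≤ n - 1

/-- The algebraic filtration `A₁` on `S`. -/
def Gen.A1 : Gen → ℤ
  | .x _ => 1
  | .x' k => (k : ℤ)
  | .y _ => 0
  | .y' k => (k : ℤ)
  | .z _ => 1
  | .w _ => 0

/-- The Alexander filtration `A₂` on `S`. -/
def Gen.A2 : Gen → ℤ
  | .x k => (k : ℤ)
  | .x' _ => 1
  | .y k => (k : ℤ)
  | .y' _ => 0
  | .z _ => 1
  | .w _ => 0

/-- The Maslov grading `M` on `S`. -/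
def Gen.M : Gen → ℤ
  | .x _ => 1
  | .x' _ => 1
  | .y _ => 0
  | .y' _ => 0
  | .z _ => 0
  | .w _ => -1

/-- The vertical differential `∂_V` on the basis `S`:
`∂_V x_n = y'_1`, `∂_V x_k = z_k` (`2 ≤ k ≤ n−1`), `∂_V x'_k = y'_k` (`2 ≤ k ≤ n`),
`∂_V y_k = w_k` (`1 ≤ k ≤ n−1`), and `∂_V σ = 0` otherwise. -/
def Gen.dV (n : ℕ) : Gen → Option Gen
  | .x k => if k = n then some (.y' 1) else some (.z k)
  | .x' k => some (.y' k)
  | .y k => if k = n then none else some (.w k)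
  | _ => none

/-- The basis set `S`. -/
abbrev SGen (n : ℕ) := {g : Gen // g.Valid n}

/-- `C^∞` as an `F = ℤ/2`-vector space with basis `{U^m σ : m ∈ ℤ, σ ∈ S}`;
the pair `(m, σ)` encodes the basis vector `U^m σ`, whose bifiltration is
`(A₁ σ − m, A₂ σ − m)` and whose Maslov grading is `M σ − 2m`.  (The value of a
finitely supported function at `(m, σ)` is the coefficient of `U^m σ`.) -/
abbrev Cinf (n : ℕ) := (ℤ × SGen n) →₀ ZMod 2

/-- The basis vector `U^m σ` of `C^∞`. -/
noncomputable def gen (n : ℕ) (m : ℤ) (σ : SGen n) : Cinf n :=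
  Finsupp.single (m, σ) 1

theorem statement_5 (n : ℕ) (hn : 2 ≤ n)
    (d : Cinf n →ₗ[ZMod 2] Cinf n)
    -- (i) ∂ ∘ ∂ = 0
    (hdd : ∀ v, d (d v) = 0)
    -- F[U,U⁻¹]-linearity: ∂ commutes with multiplication by U (the shift (m,σ) ↦ (m+1,σ))
    (hU : ∀ (m : ℤ) (σ : SGen n) (m' : ℤ) (σ' : SGen n),
      d (gen n m σ) (m', σ') = d (gen n (m + 1) σ) (m' + 1, σ'))
    -- (ii) ∂ is homogeneous of Maslov degree −1
    (hM : ∀ (m : ℤ) (σ : SGen n) (m' : ℤ) (σ' : SGen n),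
      d (gen n m σ) (m', σ') ≠ 0 → σ'.1.M - 2 * m' = σ.1.M - 2 * m - 1)
    -- (iii) ∂ strictly drops the bifiltration
    (hF : ∀ (m : ℤ) (σ : SGen n) (m' : ℤ) (σ' : SGen n),
      d (gen n m σ) (m', σ') ≠ 0 →
        σ'.1.A1 - m' ≤ σ.1.A1 - m ∧ σ'.1.A2 - m' ≤ σ.1.A2 - m ∧
          ¬(σ'.1.A1 - m' = σ.1.A1 - m ∧ σ'.1.A2 - m' = σ.1.A2 - m))
    -- (iv) the vertical components of ∂ (equal algebraic filtration) are exactly ∂_V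
    (hV : ∀ (σ : SGen n) (m' : ℤ) (σ' : SGen n),
      σ'.1.A1 - m' = σ.1.A1 →
        d (gen n 0 σ) (m', σ') = if σ.1.dV n = some σ'.1 ∧ m' = 0 then 1 else 0)
    -- (v) the coefficient of y_n in ∂x_n equals 1
    (hEnd : d (gen n 0 ⟨Gen.x n, hn, le_rfl⟩) (0, ⟨Gen.y n, by omega, le_rfl⟩) = 1) :
    -- the cycle y'_1 + Σ a_i y_i is not a boundary; equivalently [y_n] ≠ 0 in H(C∞,∂)
    (¬ ∃ ξ : Cinf n, d ξ =
        gen n 0 ⟨Gen.y' 1, le_rfl, by omega⟩ +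
          ∑ i : Fin (n - 1),
        d (gen n 0 ⟨Gen.y' 1, le_rfl, by omega⟩)
            (0, ⟨Gen.w (i.1 + 1), by omega, by have := i.isLt; omega⟩) •
          gen n 0 ⟨Gen.y (i.1 + 1), by omega, by have := i.isLt; omega⟩) ∧
      ¬ ∃ ξ : Cinf n, d ξ = gen n 0 ⟨Gen.y n, by omega, le_rfl⟩ := by
  classical
  -- coefficient formula for d ξ
  have key : ∀ (ξ : Cinf n) (τ : ℤ × SGen n),
      d ξ τ = ∑ p ∈ ξ.support, ξ p * d (gen n p.1 p.2) τ := by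
    intro ξ τ
    conv_lhs => rw [← Finsupp.sum_single ξ]
    rw [map_finsuppSum, Finsupp.sum_apply, Finsupp.sum]
    refine Finset.sum_congr rfl fun p _ => ?_
    have h1 : Finsupp.single p (ξ p) = ξ p • gen n p.1 p.2 := by
      simp [gen, Finsupp.smul_single']
    rw [h1, map_smul, Finsupp.smul_apply, smul_eq_mul]
  -- the main structural lemma
  have main : ∀ ξ : Cinf n,
      (∀ j (h2 : 2 ≤ j) (hjn : j ≤ n), d ξ (0, ⟨Gen.y' j, by omega, hjn⟩) = 0) →
      d ξ (0, ⟨Gen.y' 1, le_rfl, by omega⟩) = d ξ (0, ⟨Gen.y n, by omega, le_rfl⟩) := by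
    intro ξ hy'
    -- step 1: all coefficients ξ(0, x'_k) vanish, by downward induction on k
    have hx' : ∀ t j (h2 : 2 ≤ j) (hjn : j ≤ n) (hlt : n - j < t),
        ξ (0, ⟨Gen.x' j, by omega, hjn⟩) = 0 := by
      intro t
      induction t with
      | zero => intro j _ _ h; omega
      | succ t ih =>
        intro j h2 hjn _
        have h0 := hy' j h2 hjn
        rw [key] at h0
        rw [Finset.sum_eq_single ((0 : ℤ), (⟨Gen.x' j, by omega, hjn⟩ : SGen n))] at h0
        · have hent : d (gen n 0 ⟨Gen.x' j, by omega, hjn⟩)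
              ((0 : ℤ), (⟨Gen.y' j, by omega, hjn⟩ : SGen n)) = 1 := by
            rw [hV _ _ _ (by simp [Gen.A1])]
            simp [Gen.dV]
          rw [hent, mul_one] at h0
          exact h0
        · rintro ⟨m, σ⟩ hb hne
          by_cases hz : d (gen n m σ) ((0 : ℤ), (⟨Gen.y' j, by omega, hjn⟩ : SGen n)) = 0
          · rw [hz, mul_zero]
          · have hMe := hM m σ 0 _ hz
            have hFe := hF m σ 0 _ hz
            obtain ⟨g, hg⟩ := σ
            cases g with
            | x k =>
              simp only [Gen.M, Gen.A1, Gen.A2] at hMe hFe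
              omega
            | x' k =>
              simp only [Gen.M, Gen.A1, Gen.A2] at hMe hFe
              have hm : m = 0 := by omega
              subst hm
              have hk : (j : ℤ) ≤ (k : ℤ) := by omega
              have hkj : k ≠ j := by
                intro h; subst h; exact hne rfl
              have hkn : k ≤ n := hg.2
              rw [ih k hg.1 hkn (by omega), zero_mul]
            | y k => simp only [Gen.M] at hMe; omega
            | y' k => simp only [Gen.M] at hMe; omega
            | z k => simp only [Gen.M] at hMe; omega
            | w k =>
              simp only [Gen.M, Gen.A1, Gen.A2] at hMe hFe
              omega
        · intro ha
          rw [Finsupp.notMem_support_iff.mp ha, zero_mul]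
    have hx'0 : ∀ j (h2 : 2 ≤ j) (hjn : j ≤ n), ξ (0, ⟨Gen.x' j, by omega, hjn⟩) = 0 :=
      fun j h2 hjn => hx' (n + 1) j h2 hjn (by omega)
    -- step 2: the coefficient of d ξ at (0, y'_1) is ξ(0, x_n)
    have c1 : d ξ (0, ⟨Gen.y' 1, le_rfl, by omega⟩) = ξ (0, ⟨Gen.x n, hn, le_rfl⟩) := by
      rw [key]
      rw [Finset.sum_eq_single ((0 : ℤ), (⟨Gen.x n, hn, le_rfl⟩ : SGen n))]
      · have hent : d (gen n 0 ⟨Gen.x n, hn, le_rfl⟩)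
            ((0 : ℤ), (⟨Gen.y' 1, le_rfl, by omega⟩ : SGen n)) = 1 := by
          rw [hV _ _ _ (by simp [Gen.A1])]
          simp [Gen.dV]
        rw [hent, mul_one]
      · rintro ⟨m, σ⟩ hb hne
        by_cases hz : d (gen n m σ) ((0 : ℤ), (⟨Gen.y' 1, le_rfl, by omega⟩ : SGen n)) = 0
        · rw [hz, mul_zero]
        · have hMe := hM m σ 0 _ hz
          have hFe := hF m σ 0 _ hz
          obtain ⟨g, hg⟩ := σ
          cases g with
          | x k =>
            simp only [Gen.M, Gen.A1, Gen.A2] at hMe hFe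
            have hm : m = 0 := by omega
            subst hm
            have hkn : k ≠ n := by
              intro h; subst h; exact hne rfl
            exfalso; apply hz
            rw [hV _ _ _ (by simp [Gen.A1])]
            simp [Gen.dV, hkn]
          | x' k =>
            simp only [Gen.M, Gen.A1, Gen.A2] at hMe hFe
            have hm : m = 0 := by omega
            subst hm
            rw [hx'0 k hg.1 hg.2, zero_mul]
          | y k => simp only [Gen.M] at hMe; omega
          | y' k => simp only [Gen.M] at hMe; omega
          | z k => simp only [Gen.M] at hMe; omega
          | w k =>
            simp only [Gen.M, Gen.A1, Gen.A2] at hMe hFe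
            have hm : m = -1 := by omega
            subst hm
            exfalso; apply hz
            have hsh := hU (-1) ⟨Gen.w k, hg⟩ 0 ⟨Gen.y' 1, le_rfl, by omega⟩
            norm_num at hsh
            rw [hsh, hV _ _ _ (by simp [Gen.A1])]
            simp [Gen.dV]
      · intro ha
        rw [Finsupp.notMem_support_iff.mp ha, zero_mul]
    -- step 3: the coefficient of d ξ at (0, y_n) is ξ(0, x_n)
    have c2 : d ξ (0, ⟨Gen.y n, by omega, le_rfl⟩) = ξ (0, ⟨Gen.x n, hn, le_rfl⟩) := by
      rw [key]
      rw [Finset.sum_eq_single ((0 : ℤ), (⟨Gen.x n, hn, le_rfl⟩ : SGen n))]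
      · rw [hEnd, mul_one]
      · rintro ⟨m, σ⟩ hb hne
        by_cases hz : d (gen n m σ) ((0 : ℤ), (⟨Gen.y n, by omega, le_rfl⟩ : SGen n)) = 0
        · rw [hz, mul_zero]
        · have hMe := hM m σ 0 _ hz
          have hFe := hF m σ 0 _ hz
          obtain ⟨g, hg⟩ := σ
          cases g with
          | x k =>
            simp only [Gen.M, Gen.A1, Gen.A2] at hMe hFe
            have hm : m = 0 := by omega
            subst hm
            have hkn : k = n := by
              have := hg.2
              omega
            subst hkn
            exact absurd rfl hne
          | x' k =>
            simp only [Gen.M, Gen.A1, Gen.A2] at hMe hFe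
            omega
          | y k => simp only [Gen.M] at hMe; omega
          | y' k => simp only [Gen.M] at hMe; omega
          | z k => simp only [Gen.M] at hMe; omega
          | w k =>
            simp only [Gen.M, Gen.A1, Gen.A2] at hMe hFe
            omega
      · intro ha
        rw [Finsupp.notMem_support_iff.mp ha, zero_mul]
    rw [c1, c2]
  constructor
  · rintro ⟨ξ, hξ⟩
    have hy' : ∀ j (h2 : 2 ≤ j) (hjn : j ≤ n), d ξ (0, ⟨Gen.y' j, by omega, hjn⟩) = 0 := by
      intro j h2 hjn
      rw [hξ]
      rw [Finsupp.add_apply, Finsupp.finset_sum_apply]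
      rw [Finset.sum_eq_zero, add_zero]
      · have h1j : (1 : ℕ) ≠ j := by omega
        simp [gen, Finsupp.single_apply, h1j, Subtype.ext_iff]
      · intro i _
        simp [gen, Finsupp.single_apply, Finsupp.smul_apply, Subtype.ext_iff]
    have := main ξ hy'
    rw [hξ] at this
    rw [Finsupp.add_apply, Finsupp.add_apply, Finsupp.finset_sum_apply,
      Finsupp.finset_sum_apply] at this
    rw [Finset.sum_eq_zero (fun i _ => by
        simp [gen, Finsupp.single_apply, Finsupp.smul_apply, Subtype.ext_iff]),
      Finset.sum_eq_zero (fun i _ => by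
        have hi : i.1 + 1 ≠ n := by have := i.isLt; omega
        simp [gen, Finsupp.single_apply, Finsupp.smul_apply, hi, Subtype.ext_iff])] at this
    simp [gen, Finsupp.single_apply, Subtype.ext_iff] at this
  · rintro ⟨ξ, hξ⟩
    have hy' : ∀ j (h2 : 2 ≤ j) (hjn : j ≤ n), d ξ (0, ⟨Gen.y' j, by omega, hjn⟩) = 0 := by
      intro j h2 hjn
      rw [hξ]
      simp [gen, Finsupp.single_apply, Subtype.ext_iff]
    have := main ξ hy'
    rw [hξ] at this
    simp [gen, Finsupp.single_apply, Subtype.ext_iff] at this
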